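/- Sound typing of expressions: if Γ ⊢ e : τ is derivable via the pacing typing rules, then Γ ⊨ e : τ, i.e., for every input map ρ_in, every partial output map ρ_out ∈ ⟦Γ⟧_{ρ_in}, and every n ∈ ⟦τ⟧_{ρ_in}, the partial denotation ⟦e⟧̄_{(ρ_in,ρ_out)}(n) ≠ none. -/

import Mathlib

/-- Streams of optional integer values. -/
def RStream : Type := ℕ → Option ℤ

/-- `w₁` is less defined than `w₂`. -/
def LessDef (w₁ w₂ : RStream) : Prop := ∀ n, w₁ n = none ∨ w₁ n = w₂ n

/-- Last defined value of `w` at or before `n`. -/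
def Last (w : RStream) : ℕ → Option ℤ
  | 0 => w 0
  | n+1 => match w (n+1) with
    | some v => some v
    | none => Last w n

/-- Semantics of hold accesses. -/
def Hold (w : RStream) (n : ℕ) (v : Option ℤ) : Option ℤ :=
  match Last w n with
  | some u => some u
  | none => v

/-- Semantics of prev accesses. -/
def Prev (w : RStream) (n : ℕ) (v : Option ℤ) : Option ℤ :=
  match w n, n with
  | none, _ => none
  | some _, 0 => v
  | some _, m+1 =>
    match Last w m with
    | some u => some u
    | none => v

/-- Pacing annotations: positive boolean formulas over input variables. -/
inductive Pacing (Vi : Type) where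
  | pvar (x : Vi)
  | top
  | pand (τ₁ τ₂ : Pacing Vi)
  | por (τ₁ τ₂ : Pacing Vi)

/-- Denotation of pacing annotations as sets of time points. -/
def PacingDen {Vi : Type} (ρi : Vi → RStream) : Pacing Vi → Set ℕ
  | .pvar x => {n | ρi x n ≠ none}
  | .top => Set.univ
  | .pand τ₁ τ₂ => PacingDen ρi τ₁ ∩ PacingDen ρi τ₂
  | .por τ₁ τ₂ => PacingDen ρi τ₁ ∪ PacingDen ρi τ₂

/-- Semantic refinement of pacing annotations. -/
def Refines {Vi : Type} (τ τ' : Pacing Vi) : Prop :=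
  ∀ ρi : Vi → RStream, PacingDen ρi τ ⊆ PacingDen ρi τ'

/-- The set of τ-well-paced streams. -/
def WellPaced {Vi : Type} (τ : Pacing Vi) (ρi : Vi → RStream) : Set RStream :=
  {w | ∀ n, n ∈ PacingDen ρi τ ↔ w n ≠ none}

/-- Stream expressions over input variables `Vi` and output variables `Vo`. -/
inductive Expr (Vi Vo : Type) where
  | const (v : ℤ)
  | varIn (x : Vi)
  | varOut (x : Vo)
  | prevIn (x : Vi) (e : Expr Vi Vo)
  | prevOut (x : Vo) (e : Expr Vi Vo)
  | holdIn (x : Vi) (e : Expr Vi Vo)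
  | holdOut (x : Vo) (e : Expr Vi Vo)
  | add (e₁ e₂ : Expr Vi Vo)

/-- Addition propagating undefinedness. -/
def addOpt : Option ℤ → Option ℤ → Option ℤ
  | some a, some b => some (a + b)
  | _, _ => none

/-- Total denotational semantics of stream expressions. -/
def ExprDen {Vi Vo : Type} (ρi : Vi → RStream) (ρo : Vo → RStream) : Expr Vi Vo → RStream
  | .const v => fun _ => some v
  | .varIn x => ρi x
  | .varOut x => ρo x
  | .prevIn x e => fun n => Prev (ρi x) n (ExprDen ρi ρo e n)
  | .prevOut x e => fun n => Prev (ρo x) n (ExprDen ρi ρo e n)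
  | .holdIn x e => fun n => Hold (ρi x) n (ExprDen ρi ρo e n)
  | .holdOut x e => fun n => Hold (ρo x) n (ExprDen ρi ρo e n)
  | .add e₁ e₂ => fun n => addOpt (ExprDen ρi ρo e₁ n) (ExprDen ρi ρo e₂ n)

/-- A partial output stream, viewed as a stream (undefined entries are the always-none stream). -/
def getStream (o : Option RStream) : RStream := o.getD (fun _ => none)

/-- Partial semantics of stream expressions w.r.t. a partial output map. -/
def PExprDen {Vi Vo : Type} (ρi : Vi → RStream) (ρo : Vo → Option RStream) : Expr Vi Vo → RStream
  | .const v => fun _ => some v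
  | .varIn x => ρi x
  | .varOut x => getStream (ρo x)
  | .prevIn x e => fun n => Prev (ρi x) n (PExprDen ρi ρo e n)
  | .prevOut x e => fun n => Prev (getStream (ρo x)) n (PExprDen ρi ρo e n)
  | .holdIn x e => fun n => Hold (ρi x) n (PExprDen ρi ρo e n)
  | .holdOut x e => fun n => Hold (getStream (ρo x)) n (PExprDen ρi ρo e n)
  | .add e₁ e₂ => fun n => addOpt (PExprDen ρi ρo e₁ n) (PExprDen ρi ρo e₂ n)

/-- Totalization of a partial output map by a total one. -/
def totalize {Vo : Type} (ρ₁ : Vo → Option RStream) (ρ₂ : Vo → RStream) : Vo → RStream :=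
  fun x => (ρ₁ x).getD (ρ₂ x)

/-- An annotated stream equation `x @ τ := e`. -/
structure Equ (Vi Vo : Type) where
  out : Vo
  pac : Pacing Vi
  expr : Expr Vi Vo

/-- Satisfaction of a single equation. -/
def SatEq {Vi Vo : Type} (eq : Equ Vi Vo) (ρi : Vi → RStream) (ρo : Vo → RStream) : Prop :=
  ρo eq.out ∈ WellPaced eq.pac ρi ∧ LessDef (ρo eq.out) (ExprDen ρi ρo eq.expr)

/-- Satisfaction of a specification (a list of equations). -/
def SatSpec {Vi Vo : Type} (S : List (Equ Vi Vo)) (ρi : Vi → RStream) (ρo : Vo → RStream) : Prop :=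
  ∀ eq ∈ S, SatEq eq ρi ρo

/-- Consistency: every input map admits a satisfying output map. -/
def Consistent {Vi Vo : Type} (S : List (Equ Vi Vo)) : Prop :=
  ∀ ρi : Vi → RStream, ∃ ρo : Vo → RStream, SatSpec S ρi ρo

/-- Typing contexts. -/
def Ctx (Vi Vo : Type) : Type := Vo → Option (Pacing Vi)

/-- Interpretation of typing contexts as sets of partial output maps. -/
def InCtx {Vi Vo : Type} (Γ : Ctx Vi Vo) (ρi : Vi → RStream) (ρo : Vo → Option RStream) : Prop :=
  ∀ x, (Γ x = none ∧ ρo x = none) ∨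
    ∃ τ w, Γ x = some τ ∧ ρo x = some w ∧ w ∈ WellPaced τ ρi

/-- Typing rules for expressions. -/
inductive HasTy {Vi Vo : Type} (Γ : Ctx Vi Vo) : Expr Vi Vo → Pacing Vi → Prop where
  | const {v : ℤ} {τ} : HasTy Γ (.const v) τ
  | binop {e₁ e₂ τ} : HasTy Γ e₁ τ → HasTy Γ e₂ τ → HasTy Γ (.add e₁ e₂) τ
  | directOut {x τcan τ} : Γ x = some τcan → Refines τ τcan → HasTy Γ (.varOut x) τ
  | directIn {x τ} : Refines τ (.pvar x) → HasTy Γ (.varIn x) τ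
  | prevOut {x τcan e τ} : Γ x = some τcan → HasTy Γ e τ → Refines τ τcan →
      HasTy Γ (.prevOut x e) τ
  | prevIn {x e τ} : HasTy Γ e τ → Refines τ (.pvar x) → HasTy Γ (.prevIn x e) τ
  | holdOut {x e τ} : (Γ x).isSome → HasTy Γ e τ → HasTy Γ (.holdOut x e) τ
  | holdIn {x e τ} : HasTy Γ e τ → HasTy Γ (.holdIn x e) τ

/-- Typing rules for specifications. -/
inductive SpecTy {Vi Vo : Type} [DecidableEq Vo] : Ctx Vi Vo → List (Equ Vi Vo) → Prop where
  | empty {Γ} : SpecTy Γ []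
  | equation {Γ x τ e S} : Γ x = none → HasTy Γ e τ →
      SpecTy (Function.update Γ x (some τ)) S → SpecTy Γ (⟨x, τ, e⟩ :: S)

/-- Semantic typing of expressions. -/
def SemTyExpr {Vi Vo : Type} (Γ : Ctx Vi Vo) (e : Expr Vi Vo) (τ : Pacing Vi) : Prop :=
  ∀ (ρi : Vi → RStream) (ρo : Vo → Option RStream), InCtx Γ ρi ρo →
    ∀ n ∈ PacingDen ρi τ, PExprDen ρi ρo e n ≠ none

/-- Semantic typing of specifications. -/
def SemTySpec {Vi Vo : Type} (Γ : Ctx Vi Vo) (S : List (Equ Vi Vo)) : Prop :=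
  ∀ (ρi : Vi → RStream) (ρ₁ : Vo → Option RStream), InCtx Γ ρi ρ₁ →
    ∃ ρ₂ : Vo → RStream, SatSpec S ρi (totalize ρ₁ ρ₂)

theorem sound_typing_expr {Vi Vo : Type} (Γ : Ctx Vi Vo) (e : Expr Vi Vo) (τ : Pacing Vi)
    (h : HasTy Γ e τ) : SemTyExpr Γ e τ := by
  induction h with
  | const => intro ρi ρo _ n _; simp [PExprDen]
  | binop h1 h2 ih1 ih2 =>
    intro ρi ρo hctx n hn
    have a1 := ih1 ρi ρo hctx n hn
    have a2 := ih2 ρi ρo hctx n hn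
    simp only [PExprDen, addOpt]
    cases hv1 : PExprDen ρi ρo _ n with
    | none => exact absurd hv1 a1
    | some v1 =>
      cases hv2 : PExprDen ρi ρo _ n with
      | none => exact absurd hv2 a2
      | some v2 => simp
  | directOut hΓ href =>
    intro ρi ρo hctx n hn
    rename_i x τcan _
    rcases hctx x with ⟨h1, _⟩ | ⟨τ', w, h1, h2, hwp⟩
    · rw [hΓ] at h1; exact absurd h1 (by simp)
    · rw [hΓ] at h1; injection h1 with h1; subst h1
      simp only [PExprDen, getStream, h2, Option.getD_some]
      exact (hwp n).mp (href ρi hn)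
  | directIn href =>
    intro ρi ρo hctx n hn
    exact href ρi hn
  | prevOut hΓ he href ih =>
    intro ρi ρo hctx n hn
    rename_i x τcan e _
    have hv := ih ρi ρo hctx n hn
    rcases hctx x with ⟨h1, _⟩ | ⟨τ', w, h1, h2, hwp⟩
    · rw [hΓ] at h1; exact absurd h1 (by simp)
    · rw [hΓ] at h1; injection h1 with h1; subst h1
      have hw : w n ≠ none := (hwp n).mp (href ρi hn)
      simp only [PExprDen, getStream, h2, Option.getD_some, Prev]
      show Prev w n (PExprDen ρi ρo e n) ≠ none
      unfold Prev
      cases hwn : w n with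
      | none => exact absurd hwn hw
      | some u =>
        cases n with
        | zero => exact hv
        | succ m =>
          show (match Last w m with | some u => some u | none => PExprDen ρi ρo e (m+1)) ≠ none
          cases Last w m with
          | none => exact hv
          | some u' => simp
  | prevIn he href ih =>
    intro ρi ρo hctx n hn
    have hv := ih ρi ρo hctx n hn
    rename_i x e _
    have hw : ρi x n ≠ none := href ρi hn
    simp only [PExprDen, Prev]
    cases hwn : ρi x n with
    | none => exact absurd hwn hw
    | some u =>
      cases n with
      | zero => exact hv
      | succ m =>
        show (match Last (ρi x) m with | some u => some u | none => PExprDen ρi ρo e (m+1)) ≠ none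
        cases Last (ρi x) m with
        | none => exact hv
        | some u' => simp
  | holdOut _ he ih =>
    intro ρi ρo hctx n hn
    have hv := ih ρi ρo hctx n hn
    rename_i x e _ _
    simp only [PExprDen, Hold]
    cases Last (getStream (ρo x)) n with
    | none => exact hv
    | some u => simp
  | holdIn he ih =>
    intro ρi ρo hctx n hn
    have hv := ih ρi ρo hctx n hn
    rename_i x e _
    simp only [PExprDen, Hold]
    cases Last (ρi x) n with
    | none => exact hv
    | some u => simp
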